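/- Let (A, ∘) be an associative commutative algebra of finite dimension n over a field F. If for every x ∈ A the characteristic polynomial of the left multiplication operator P_x is (t − λ_x)^n for some scalar λ_x ∈ F, then (A, ∘) is either nilpotent or unital. -/

import Mathlib

/-- Left-nested product `(...((a ∘ b₁) ∘ b₂) ∘ ...) ∘ bₘ` of an element with a list,
with respect to a bilinear multiplication `mul`. For an associative commutative
multiplication this computes the product of the `m+1` elements `a, b₁, …, bₘ`. -/
def nprod {F A : Type*} [Field F] [AddCommGroup A] [Module F A]
    (mul : A →ₗ[F] A →ₗ[F] A) : A → List A → A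
  | a, [] => a
  | a, b :: l => nprod mul (mul a b) l

/-- Applying the product of a list of restricted endomorphisms agrees with applying
the product of the original list. -/
lemma pmap_restrict_prod_apply {F V : Type*} [Field F] [AddCommGroup V] [Module F V]
    (p : Submodule F V) :
    ∀ (l : List (Module.End F V)) (h : ∀ g ∈ l, ∀ x ∈ p, g x ∈ p) (x : p),
      (((l.pmap (fun g (hg : ∀ x ∈ p, g x ∈ p) => LinearMap.restrict g hg)
          h).prod x : V)) = l.prod (x : V) := by
  intro l
  induction l with
  | nil => simp
  | cons g l ih =>
      intro h x
      have h1 : ∀ g' ∈ l, ∀ x ∈ p, g' x ∈ p := fun g' hg' => h g' (List.mem_cons_of_mem _ hg')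
      have hg : ∀ x ∈ p, g x ∈ p := h g (List.mem_cons_self)
      simp only [List.pmap, List.prod_cons, Module.End.mul_apply]
      rw [LinearMap.restrict_coe_apply, ih h1]

/-- Key lemma: the product of at least `d ≥ finrank V` pairwise commuting nilpotent
endomorphisms of a finite-dimensional space `V` is zero. -/
lemma nilpotent_commuting_prod_eq_zero {F : Type*} [Field F] (d : ℕ) :
    ∀ {V : Type*} [AddCommGroup V] [Module F V] [FiniteDimensional F V],
      Module.finrank F V ≤ d →
      ∀ l : List (Module.End F V),
        (∀ f ∈ l, IsNilpotent f) →
        (∀ f ∈ l, ∀ g ∈ l, f * g = g * f) →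
        d ≤ l.length → l.prod = 0 := by
  induction d with
  | zero =>
      intro V _ _ _ hrank l _ _ _
      have : Module.finrank F V = 0 := Nat.le_zero.mp hrank
      have : Subsingleton V := Module.finrank_zero_iff.mp this
      exact Subsingleton.elim _ _
  | succ d ih =>
      intro V _ _ _ hrank l hnil hcomm hlen
      rcases subsingleton_or_nontrivial V with hV | hV
      · exact Subsingleton.elim _ _
      obtain rfl | ⟨l', f, rfl⟩ := l.eq_nil_or_concat
      · simp at hlen
      rw [List.concat_eq_append] at hnil hcomm hlen ⊢
      have hfl : f ∈ l' ++ [f] := by simp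
      have hf : IsNilpotent f := hnil f hfl
      -- `f` is not injective
      have hker : LinearMap.ker f ≠ ⊥ := by
        intro hk
        obtain ⟨k, hfk⟩ := hf
        have hinj : Function.Injective f := LinearMap.ker_eq_bot.mp hk
        have hik : Function.Injective ⇑(f ^ k : Module.End F V) := by
          rw [Module.End.coe_pow]
          exact hinj.iterate k
        obtain ⟨x, hx⟩ := exists_ne (0 : V)
        apply hx
        apply hik
        simp [hfk]
      have hkerpos : 0 < Module.finrank F (LinearMap.ker f) := by
        rw [Module.finrank_pos_iff]
        exact Submodule.nontrivial_iff_ne_bot.mpr hker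
      have hrange : Module.finrank F (LinearMap.range f) ≤ d := by
        have h1 := LinearMap.finrank_range_add_finrank_ker f
        omega
      set p := LinearMap.range f with hp
      have hmaps : ∀ g ∈ l', ∀ x ∈ p, g x ∈ p := by
        intro g hg x hx
        obtain ⟨v, rfl⟩ := hx
        have hgl : g ∈ l' ++ [f] := List.mem_append_left _ hg
        have hc := hcomm f hfl g hgl
        refine ⟨g v, ?_⟩
        have : (f * g) v = (g * f) v := by rw [hc]
        simpa [Module.End.mul_apply] using this
      set l'' := l'.pmap (fun g (hg : ∀ x ∈ p, g x ∈ p) => LinearMap.restrict g hg) hmaps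
        with hl''
      have hprod : l''.prod = 0 := by
        refine ih hrange l'' ?_ ?_ ?_
        · intro f' hf'
          rw [hl''] at hf'
          obtain ⟨g, hg, rfl⟩ := List.mem_pmap.mp hf'
          obtain ⟨k, hk⟩ := hnil g (List.mem_append_left _ hg)
          refine ⟨k, ?_⟩
          rw [Module.End.pow_restrict]
          ext x
          simp [LinearMap.restrict_coe_apply, hk]
        · intro f₁ hf₁ f₂ hf₂
          rw [hl''] at hf₁ hf₂
          obtain ⟨g₁, hg₁, rfl⟩ := List.mem_pmap.mp hf₁
          obtain ⟨g₂, hg₂, rfl⟩ := List.mem_pmap.mp hf₂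
          have hc := hcomm g₁ (List.mem_append_left _ hg₁) g₂ (List.mem_append_left _ hg₂)
          ext x
          have : (g₁ * g₂) (x : V) = (g₂ * g₁) (x : V) := by rw [hc]
          simpa [Module.End.mul_apply, LinearMap.restrict_coe_apply] using this
        · rw [hl'', List.length_pmap]
          rw [List.length_append] at hlen
          simp at hlen
          omega
      ext v
      have hfv : f v ∈ p := ⟨v, rfl⟩
      have := pmap_restrict_prod_apply p l' hmaps ⟨f v, hfv⟩
      rw [hprod] at this
      simp only [LinearMap.zero_apply, ZeroMemClass.coe_zero] at this
      simp [List.prod_append, Module.End.mul_apply, ← this]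

lemma nprod_eq_prod_apply {F A : Type*} [Field F] [AddCommGroup A] [Module F A]
    (mul : A →ₗ[F] A →ₗ[F] A) (hcomm : ∀ x y : A, mul x y = mul y x) :
    ∀ (l : List A) (a : A), nprod mul a l = ((l.map (fun b => mul b)).reverse).prod a := by
  intro l
  induction l with
  | nil => intro a; simp [nprod]
  | cons b l ih =>
      intro a
      show nprod mul (mul a b) l = _
      rw [ih (mul a b)]
      simp [List.prod_append, Module.End.mul_apply, hcomm a b]

open Polynomial in
/-- If `(A, ∘)` is an `n`-dimensional associative commutative algebra
over a field `F` such that for every `x` the characteristic polynomial of the left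
multiplication operator `P_x` is `(t - λ_x)^n`, then `A` is nilpotent or unital. -/
theorem assoc_comm_charpoly_nilpotent_or_unital {F A : Type*} [Field F]
    [AddCommGroup A] [Module F A] [FiniteDimensional F A]
    (mul : A →ₗ[F] A →ₗ[F] A)
    (hcomm : ∀ x y : A, mul x y = mul y x)
    (hassoc : ∀ x y z : A, mul (mul x y) z = mul x (mul y z))
    (hchar : ∀ x : A, ∃ lam : F,
      LinearMap.charpoly (mul x) = (X - C lam) ^ (Module.finrank F A)) :
    (∃ k : ℕ, 1 ≤ k ∧ ∀ (a : A) (l : List A), l.length + 1 = k → nprod mul a l = 0)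
    ∨ (∃ e : A, ∀ x : A, mul e x = x) := by
  have hmul : ∀ x y : A, mul x * mul y = mul (mul x y) := by
    intro x y; ext z
    exact (hassoc x y z).symm
  by_cases hn : ∀ x : A, IsNilpotent (mul x)
  · left
    refine ⟨Module.finrank F A + 1, by omega, ?_⟩
    intro a l hl
    rw [nprod_eq_prod_apply mul hcomm]
    have hz : ((l.map (fun b => mul b)).reverse).prod = 0 := by
      refine nilpotent_commuting_prod_eq_zero (Module.finrank F A) le_rfl _ ?_ ?_ ?_
      · intro f hf
        rw [List.mem_reverse, List.mem_map] at hf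
        obtain ⟨b, _, rfl⟩ := hf
        exact hn b
      · intro f hf g hg
        rw [List.mem_reverse, List.mem_map] at hf hg
        obtain ⟨b₁, _, rfl⟩ := hf
        obtain ⟨b₂, _, rfl⟩ := hg
        rw [hmul, hmul, hcomm b₁ b₂]
      · simp; omega
    rw [hz]
    rfl
  · right
    push_neg at hn
    obtain ⟨x, hx⟩ := hn
    obtain ⟨lam, hc⟩ := hchar x
    have hCH := LinearMap.aeval_self_charpoly (mul x)
    rw [hc] at hCH
    have hN : IsNilpotent (mul x - algebraMap F (Module.End F A) lam) := by
      refine ⟨Module.finrank F A, ?_⟩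
      rw [← hCH]
      simp [map_pow]
    have hlam : lam ≠ 0 := by
      rintro rfl
      apply hx
      simpa using hN
    have hu : IsUnit (algebraMap F (Module.End F A) lam) :=
      (isUnit_iff_ne_zero.mpr hlam).map (algebraMap F _)
    have hunit : IsUnit (mul x) := by
      have h := hN.isUnit_add_left_of_commute hu (Algebra.commutes lam _).symm
      rwa [add_sub_cancel] at h
    have hbij := (Module.End.isUnit_iff (mul x)).mp hunit
    obtain ⟨e, he⟩ := hbij.surjective x
    refine ⟨e, fun y => ?_⟩
    apply hbij.injective
    show mul x (mul e y) = mul x y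
    rw [← hassoc x e y, he]
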